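/- arXiv:1702.04525 — 2 statements merged into one kernel-verified Lean document; each statement's English description precedes it below -/
import Mathlib

section
/- Let A be a random variable uniform on F_q^F and let X, Y be random variables such that the pair (X, Y) determines A (i.e., H(A | X, Y) = 0). Then H(X) + I(Y; A) ≥ F, where I denotes mutual information and entropies are base q. -/
open Finset Real

namespace GDSP

variable {Ω : Type} [Fintype Ω]

/-- Probability that the random variable `X` takes the value `x`, under weights `p`. -/
noncomputable def pr {α : Type} [DecidableEq α] (p : Ω → ℝ) (X : Ω → α) (x : α) : ℝ :=
  ∑ ω, if X ω = x then p ω else 0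

/-- Shannon entropy of `X`, to base `q` (convention `0 · log 0 = 0`). -/
noncomputable def ent {α : Type} [Fintype α] [DecidableEq α] (q : ℝ) (p : Ω → ℝ)
    (X : Ω → α) : ℝ :=
  -∑ x, pr p X x * Real.logb q (pr p X x)

/-- Conditional entropy `H(X | Y) = H(X, Y) - H(Y)`. -/
noncomputable def condEnt {α β : Type} [Fintype α] [DecidableEq α] [Fintype β] [DecidableEq β]
    (q : ℝ) (p : Ω → ℝ) (X : Ω → α) (Y : Ω → β) : ℝ :=
  ent q p (fun ω => (X ω, Y ω)) - ent q p Y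

/-- Mutual information `I(X; Y) = H(X) - H(X | Y)`. -/
noncomputable def mutInf {α β : Type} [Fintype α] [DecidableEq α] [Fintype β] [DecidableEq β]
    (q : ℝ) (p : Ω → ℝ) (X : Ω → α) (Y : Ω → β) : ℝ :=
  ent q p X - condEnt q p X Y

/-- The weights conditioned on the event `A = a`. -/
noncomputable def condp {α : Type} [DecidableEq α] (p : Ω → ℝ) (A : Ω → α) (a : α) : Ω → ℝ :=
  fun ω => (if A ω = a then p ω else 0) / pr p A a

/-- `p` is a probability assignment on the finite sample space `Ω`. -/
def IsProb (p : Ω → ℝ) : Prop := (∀ ω, 0 ≤ p ω) ∧ ∑ ω, p ω = 1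

/-- `A` is uniformly distributed on its (finite) alphabet. -/
def Uniform {α : Type} [Fintype α] [DecidableEq α] (p : Ω → ℝ) (A : Ω → α) : Prop :=
  ∀ a, pr p A a = (Fintype.card α : ℝ)⁻¹

/-- `X` and `Y` are independent. -/
def Indep {α β : Type} [DecidableEq α] [DecidableEq β] (p : Ω → ℝ) (X : Ω → α)
    (Y : Ω → β) : Prop :=
  ∀ x y, pr p (fun ω => (X ω, Y ω)) (x, y) = pr p X x * pr p Y y

/-- The uniform probability assignment on a finite type. -/
noncomputable def punif (α : Type) [Fintype α] : α → ℝ := fun _ => (Fintype.card α : ℝ)⁻¹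

end GDSP

section Aux

open GDSP

variable {Ω : Type} [Fintype Ω]

lemma pr_nonneg {α : Type} [DecidableEq α] {p : Ω → ℝ} (hp : ∀ ω, 0 ≤ p ω)
    (X : Ω → α) (x : α) : 0 ≤ pr p X x :=
  Finset.sum_nonneg fun ω _ => by split; exacts [hp ω, le_rfl]

lemma sum_pr {α : Type} [Fintype α] [DecidableEq α] {p : Ω → ℝ} (hp : ∑ ω, p ω = 1)
    (X : Ω → α) : ∑ x, pr p X x = 1 := by
  unfold pr
  rw [Finset.sum_comm]
  simpa using hp

/-- `pr` of a composed (mapped) random variable, as a sum over values. -/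
lemma pr_comp {α β : Type} [Fintype α] [DecidableEq α] [DecidableEq β] (p : Ω → ℝ)
    (Z : Ω → α) (g : α → β) (y : β) :
    pr p (fun ω => g (Z ω)) y = ∑ z, if g z = y then pr p Z z else 0 := by
  unfold pr
  have h : ∀ z : α, (if g z = y then ∑ ω, (if Z ω = z then p ω else 0) else 0)
      = ∑ ω, if Z ω = z then (if g z = y then p ω else 0) else 0 := by
    intro z
    split_ifs with h <;> simp [h]
  rw [Finset.sum_congr rfl fun z _ => h z, Finset.sum_comm]
  refine Finset.sum_congr rfl fun ω _ => ?_
  rw [Finset.sum_ite_eq Finset.univ (Z ω) (fun z => if g z = y then p ω else 0)]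
  simp

lemma pr_le_pr_comp {α β : Type} [Fintype α] [DecidableEq α] [DecidableEq β] {p : Ω → ℝ}
    (hp : ∀ ω, 0 ≤ p ω) (Z : Ω → α) (g : α → β) (z : α) :
    pr p Z z ≤ pr p (fun ω => g (Z ω)) (g z) := by
  rw [pr_comp p Z g (g z)]
  have h := Finset.single_le_sum (f := fun z' => if g z' = g z then pr p Z z' else 0)
    (fun z' _ => by split; exacts [pr_nonneg hp Z z', le_rfl])
    (Finset.mem_univ z)
  simpa using h

/-- Entropy does not increase under applying a function. -/
lemma ent_comp_le {α β : Type} [Fintype α] [DecidableEq α] [Fintype β] [DecidableEq β]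
    {q : ℝ} (hq : 1 < q) {p : Ω → ℝ} (hp : ∀ ω, 0 ≤ p ω) (Z : Ω → α) (g : α → β) :
    ent q p (fun ω => g (Z ω)) ≤ ent q p Z := by
  have hrw : ent q p (fun ω => g (Z ω))
      = -∑ z, pr p Z z * Real.logb q (pr p (fun ω => g (Z ω)) (g z)) := by
    unfold ent
    congr 1
    calc ∑ y, pr p (fun ω => g (Z ω)) y * Real.logb q (pr p (fun ω => g (Z ω)) y)
        = ∑ y, ∑ z, (if g z = y then pr p Z z else 0)
            * Real.logb q (pr p (fun ω => g (Z ω)) y) := by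
          refine Finset.sum_congr rfl fun y _ => ?_
          rw [pr_comp, Finset.sum_mul]
      _ = ∑ z, ∑ y, if g z = y then
            pr p Z z * Real.logb q (pr p (fun ω => g (Z ω)) y) else 0 := by
          rw [Finset.sum_comm]
          refine Finset.sum_congr rfl fun z _ => Finset.sum_congr rfl fun y _ => ?_
          split <;> simp
      _ = ∑ z, pr p Z z * Real.logb q (pr p (fun ω => g (Z ω)) (g z)) := by
          refine Finset.sum_congr rfl fun z _ => ?_
          simp
  rw [hrw]
  unfold ent
  rw [neg_le_neg_iff]
  refine Finset.sum_le_sum fun z _ => ?_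
  rcases eq_or_lt_of_le (pr_nonneg hp Z z) with h | h
  · simp [← h]
  · exact mul_le_mul_of_nonneg_left
      (Real.logb_le_logb_of_le hq h (pr_le_pr_comp hp Z g z)) h.le

/-- Entropy is invariant under swapping the coordinates of a pair. -/
lemma ent_swap {α β : Type} [Fintype α] [DecidableEq α] [Fintype β] [DecidableEq β]
    {q : ℝ} (hq : 1 < q) {p : Ω → ℝ} (hp : ∀ ω, 0 ≤ p ω) (X : Ω → α) (Y : Ω → β) :
    ent q p (fun ω => (Y ω, X ω)) = ent q p (fun ω => (X ω, Y ω)) := by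
  refine le_antisymm ?_ ?_
  · exact ent_comp_le hq hp (fun ω => (X ω, Y ω)) Prod.swap
  · exact ent_comp_le hq hp (fun ω => (Y ω, X ω)) Prod.swap

lemma pr_fst {α β : Type} [Fintype α] [DecidableEq α] [Fintype β] [DecidableEq β]
    (p : Ω → ℝ) (X : Ω → α) (Y : Ω → β) (x : α) :
    ∑ y, pr p (fun ω => (X ω, Y ω)) (x, y) = pr p X x := by
  unfold pr
  rw [Finset.sum_comm]
  refine Finset.sum_congr rfl fun ω _ => ?_
  by_cases h : X ω = x <;> simp [Prod.ext_iff, h]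

lemma pr_snd {α β : Type} [Fintype α] [DecidableEq α] [Fintype β] [DecidableEq β]
    (p : Ω → ℝ) (X : Ω → α) (Y : Ω → β) (y : β) :
    ∑ x, pr p (fun ω => (X ω, Y ω)) (x, y) = pr p Y y := by
  unfold pr
  rw [Finset.sum_comm]
  refine Finset.sum_congr rfl fun ω _ => ?_
  by_cases h : Y ω = y <;> simp [Prod.ext_iff, h]

lemma pr_pair_le_fst {α β : Type} [Fintype α] [DecidableEq α] [Fintype β] [DecidableEq β]
    {p : Ω → ℝ} (hp : ∀ ω, 0 ≤ p ω) (X : Ω → α) (Y : Ω → β) (x : α) (y : β) :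
    pr p (fun ω => (X ω, Y ω)) (x, y) ≤ pr p X x := by
  refine Finset.sum_le_sum fun ω _ => ?_
  dsimp only
  split_ifs with h1 h2 <;> simp_all [Prod.ext_iff]

lemma pr_pair_le_snd {α β : Type} [Fintype α] [DecidableEq α] [Fintype β] [DecidableEq β]
    {p : Ω → ℝ} (hp : ∀ ω, 0 ≤ p ω) (X : Ω → α) (Y : Ω → β) (x : α) (y : β) :
    pr p (fun ω => (X ω, Y ω)) (x, y) ≤ pr p Y y := by
  refine Finset.sum_le_sum fun ω _ => ?_
  dsimp only
  split_ifs with h1 h2 <;> simp_all [Prod.ext_iff]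

/-- Subadditivity of entropy. -/
lemma ent_pair_le {α β : Type} [Fintype α] [DecidableEq α] [Fintype β] [DecidableEq β]
    {q : ℝ} (hq : 1 < q) {p : Ω → ℝ} (hp : IsProb p) (X : Ω → α) (Y : Ω → β) :
    ent q p (fun ω => (X ω, Y ω)) ≤ ent q p X + ent q p Y := by
  obtain ⟨hp0, hp1⟩ := hp
  set J : α × β → ℝ := pr p (fun ω => (X ω, Y ω)) with hJ
  have hJ0 : ∀ z : α × β, 0 ≤ J z := fun z => pr_nonneg hp0 _ z
  have hlogq : 0 < Real.log q := Real.log_pos hq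
  have hX : ent q p X = -∑ z : α × β, J z * Real.logb q (pr p X z.1) := by
    unfold ent
    rw [Fintype.sum_prod_type]
    congr 1
    refine Finset.sum_congr rfl fun x _ => ?_
    calc pr p X x * Real.logb q (pr p X x)
        = (∑ y, J (x, y)) * Real.logb q (pr p X x) := by rw [hJ, pr_fst]
      _ = ∑ y, J (x, y) * Real.logb q (pr p X x) := Finset.sum_mul ..
  have hY : ent q p Y = -∑ z : α × β, J z * Real.logb q (pr p Y z.2) := by
    unfold ent
    rw [Fintype.sum_prod_type_right]
    congr 1
    refine Finset.sum_congr rfl fun y _ => ?_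
    calc pr p Y y * Real.logb q (pr p Y y)
        = (∑ x, J (x, y)) * Real.logb q (pr p Y y) := by rw [hJ, pr_snd]
      _ = ∑ x, J (x, y) * Real.logb q (pr p Y y) := Finset.sum_mul ..
  rw [hX, hY]
  show -∑ z : α × β, J z * Real.logb q (J z) ≤ _
  rw [← neg_add, neg_le_neg_iff, ← Finset.sum_add_distrib]
  -- key pointwise bound
  have key : ∀ z : α × β,
      (J z * Real.logb q (pr p X z.1) + J z * Real.logb q (pr p Y z.2))
        - J z * Real.logb q (J z) ≤ (pr p X z.1 * pr p Y z.2 - J z) / Real.log q := by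
    intro z
    have hm0 : 0 ≤ pr p X z.1 * pr p Y z.2 :=
      mul_nonneg (pr_nonneg hp0 X z.1) (pr_nonneg hp0 Y z.2)
    rcases eq_or_lt_of_le (hJ0 z) with h0 | h0
    · rw [← h0]
      simp only [zero_mul, add_zero, sub_zero, zero_sub, neg_zero, zero_add]
      exact div_nonneg hm0 hlogq.le
    · have hx : 0 < pr p X z.1 :=
        lt_of_lt_of_le h0 (by rw [hJ]; exact pr_pair_le_fst hp0 X Y z.1 z.2)
      have hy : 0 < pr p Y z.2 :=
        lt_of_lt_of_le h0 (by rw [hJ]; exact pr_pair_le_snd hp0 X Y z.1 z.2)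
      have hm : 0 < pr p X z.1 * pr p Y z.2 := mul_pos hx hy
      have hlog : Real.log (pr p X z.1 * pr p Y z.2 / J z)
          ≤ pr p X z.1 * pr p Y z.2 / J z - 1 :=
        Real.log_le_sub_one_of_pos (div_pos hm h0)
      have hexp : Real.log (pr p X z.1 * pr p Y z.2 / J z)
          = Real.log (pr p X z.1) + Real.log (pr p Y z.2) - Real.log (J z) := by
        rw [Real.log_div hm.ne' h0.ne', Real.log_mul hx.ne' hy.ne']
      rw [hexp] at hlog
      have h2 : J z * (Real.log (pr p X z.1) + Real.log (pr p Y z.2) - Real.log (J z))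
          ≤ pr p X z.1 * pr p Y z.2 - J z := by
        calc J z * (Real.log (pr p X z.1) + Real.log (pr p Y z.2) - Real.log (J z))
            ≤ J z * (pr p X z.1 * pr p Y z.2 / J z - 1) :=
              mul_le_mul_of_nonneg_left hlog h0.le
          _ = pr p X z.1 * pr p Y z.2 - J z := by field_simp
      have hgoal : (J z * Real.logb q (pr p X z.1) + J z * Real.logb q (pr p Y z.2))
          - J z * Real.logb q (J z)
          = J z * (Real.log (pr p X z.1) + Real.log (pr p Y z.2) - Real.log (J z))
            / Real.log q := by
        unfold Real.logb; ring
      rw [hgoal]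
      exact (div_le_div_iff_of_pos_right hlogq).mpr h2
  have hsum : ∑ z : α × β, (pr p X z.1 * pr p Y z.2 - J z) = 0 := by
    rw [Finset.sum_sub_distrib]
    have h1 : ∑ z : α × β, pr p X z.1 * pr p Y z.2 = 1 := by
      rw [Fintype.sum_prod_type]
      simp_rw [← Finset.mul_sum, sum_pr hp1 Y, mul_one]
      exact sum_pr hp1 X
    have h2 : ∑ z : α × β, J z = 1 := sum_pr hp1 _
    rw [h1, h2, sub_self]
  have hfin := Finset.sum_le_sum fun z (_ : z ∈ Finset.univ) => key z
  rw [← Finset.sum_div, hsum, zero_div, Finset.sum_sub_distrib, sub_nonpos] at hfin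
  exact hfin

/-- Entropy of a uniform random variable. -/
lemma ent_uniform {α : Type} [Fintype α] [DecidableEq α] [Nonempty α]
    {q : ℝ} {p : Ω → ℝ} (A : Ω → α) (hA : Uniform p A) :
    ent q p A = Real.logb q (Fintype.card α) := by
  unfold ent
  have hc : ((Fintype.card α : ℝ)) ≠ 0 := Nat.cast_ne_zero.2 Fintype.card_ne_zero
  replace hA : ∀ a, pr p A a = (Fintype.card α : ℝ)⁻¹ := hA
  simp_rw [hA]
  rw [Finset.sum_const, Finset.card_univ, nsmul_eq_mul, Real.logb_inv]
  field_simp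

end Aux

open GDSP in
/-- If `A` is uniform on `F_q^F` and the pair `(X, Y)` determines `A`, then
`H(X) + I(Y; A) ≥ F` (entropies base `q`). -/
theorem stmt3 {Ω : Type} [Fintype Ω] (q F : ℕ) [NeZero q] (hq : q.Prime)
    {α β : Type} [Fintype α] [DecidableEq α] [Fintype β] [DecidableEq β]
    (p : Ω → ℝ) (hp : IsProb p)
    (X : Ω → α) (Y : Ω → β) (A : Ω → (Fin F → ZMod q)) (hA : Uniform p A)
    (hdec : condEnt (q : ℝ) p A (fun ω => (X ω, Y ω)) = 0) :
    ent (q : ℝ) p X + mutInf (q : ℝ) p Y A ≥ F := by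
  have hq1 : (1 : ℝ) < q := by exact_mod_cast hq.one_lt
  obtain ⟨hp0, hp1⟩ := hp
  -- H(A) = F
  have hcard : (Fintype.card (Fin F → ZMod q) : ℝ) = (q : ℝ) ^ F := by
    rw [Fintype.card_fun, ZMod.card, Fintype.card_fin]
    push_cast; ring
  have hentA : ent (q : ℝ) p A = F := by
    rw [ent_uniform A hA, hcard, Real.logb_pow, Real.logb_self_eq_one hq1, mul_one]
  -- key chain: H(Y,A) ≤ H(X) + H(Y)
  have h1 : ent (q : ℝ) p (fun ω => (Y ω, A ω)) = ent (q : ℝ) p (fun ω => (A ω, Y ω)) :=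
    ent_swap hq1 hp0 A Y
  have h2 : ent (q : ℝ) p (fun ω => (A ω, Y ω))
      ≤ ent (q : ℝ) p (fun ω => (A ω, (X ω, Y ω))) := by
    have := ent_comp_le (Ω := Ω) hq1 hp0 (fun ω => (A ω, (X ω, Y ω)))
      (fun z => (z.1, z.2.2))
    simpa using this
  have h3 : ent (q : ℝ) p (fun ω => (A ω, (X ω, Y ω)))
      = ent (q : ℝ) p (fun ω => (X ω, Y ω)) := by
    have := hdec
    unfold condEnt at this
    linarith
  have h4 : ent (q : ℝ) p (fun ω => (X ω, Y ω)) ≤ ent (q : ℝ) p X + ent (q : ℝ) p Y :=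
    ent_pair_le hq1 ⟨hp0, hp1⟩ X Y
  have hYA : ent (q : ℝ) p (fun ω => (Y ω, A ω)) ≤ ent (q : ℝ) p X + ent (q : ℝ) p Y := by
    rw [h1]; linarith
  unfold mutInf condEnt
  rw [hentA]
  linarith
end

section
/- For the complete bipartite graph K_{3,9} with left vertices v_1,v_2,v_3 and right vertices u_1,...,u_9, where every edge {v_i, u_{j+3ℓ}} for j∈{1,2,3} demands file A_ℓ-appropriately colored as in the paper's Figure 4, augmented with edges among each triple {u_{1+3ℓ}, u_{2+3ℓ}, u_{3+3ℓ}} (ℓ = 0,1,2) all demanding file A_4: the assignment h_{v_i} = A_4 (full file A_4, size 1) for i = 1,2,3, and h_{u_{j+3ℓ}} = A_{ℓ+1} + (j−1)·A_4 (a linear combination over F_q of the size-1 files) is a valid assignment with total memory 12; in particular every black edge (within a right triple) recovers A_4 since two distinct combinations A_c + αA_4, A_c + βA_4 with α ≠ β determine A_4. -/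
open Finset Real

namespace GDSP

lemma pr_pair_of_fun' {Ω : Type} [Fintype Ω] {α β : Type} [DecidableEq α] [DecidableEq β]
    (p : Ω → ℝ) (X : Ω → α) (Y : Ω → β) (f : β → α) (h : ∀ ω, X ω = f (Y ω))
    (x : α) (y : β) :
    pr p (fun ω => (X ω, Y ω)) (x, y) = if x = f y then pr p Y y else 0 := by
  unfold pr
  split_ifs with hx
  · apply Finset.sum_congr rfl
    intro ω _
    by_cases hy : Y ω = y
    · simp [Prod.ext_iff, hy, h ω, hx]
    · simp [Prod.ext_iff, hy]
  · apply Finset.sum_eq_zero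
    intro ω _
    have hne : ¬ ((X ω, Y ω) = (x, y)) := by
      rintro hxy
      apply hx
      simp only [Prod.mk.injEq] at hxy
      rw [← hxy.1, h ω, hxy.2]
    simp [hne]

lemma condEnt_eq_zero_of_fun {Ω : Type} [Fintype Ω] {α β : Type}
    [Fintype α] [DecidableEq α] [Fintype β] [DecidableEq β]
    (q : ℝ) (p : Ω → ℝ) (X : Ω → α) (Y : Ω → β) (f : β → α) (h : ∀ ω, X ω = f (Y ω)) :
    condEnt q p X Y = 0 := by
  have hent : ent q p (fun ω => (X ω, Y ω)) = ent q p Y := by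
    unfold ent
    congr 1
    rw [Fintype.sum_prod_type_right]
    apply Finset.sum_congr rfl
    intro y _
    rw [Finset.sum_eq_single (f y)]
    · rw [pr_pair_of_fun' p X Y f h]; simp
    · intro x _ hx; rw [pr_pair_of_fun' p X Y f h]; simp [hx]
    · simp
  unfold condEnt
  rw [hent, sub_self]

lemma pr_const_shift (q : ℕ) [NeZero q] (Z : (Fin 4 → ZMod q) → ZMod q) (i : Fin 4)
    (hZ : ∀ (ω : Fin 4 → ZMod q) (c : ZMod q), Z (Function.update ω i (ω i + c)) = Z ω + c)
    (z : ZMod q) :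
    pr (punif (Fin 4 → ZMod q)) Z z = (q : ℝ)⁻¹ := by
  classical
  have hshift : ∀ z : ZMod q,
      pr (punif (Fin 4 → ZMod q)) Z z = pr (punif (Fin 4 → ZMod q)) Z 0 := by
    intro z
    let e : (Fin 4 → ZMod q) ≃ (Fin 4 → ZMod q) :=
      { toFun := fun ω => Function.update ω i (ω i + z)
        invFun := fun ω => Function.update ω i (ω i - z)
        left_inv := fun ω => by
          simp [Function.update_idem, Function.update_self, Function.update_eq_self]
        right_inv := fun ω => by
          simp [Function.update_idem, Function.update_self, Function.update_eq_self] }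
    have hc := Equiv.sum_comp e (fun ω => if Z ω = z then punif (Fin 4 → ZMod q) ω else 0)
    unfold pr
    rw [← hc]
    apply Finset.sum_congr rfl
    intro ω _
    have hZe : Z (e ω) = Z ω + z := hZ ω z
    simp only [hZe, punif, add_eq_right]
  have hsum : ∑ w : ZMod q, pr (punif (Fin 4 → ZMod q)) Z w = 1 := by
    unfold pr
    rw [Finset.sum_comm]
    have h1 : ∀ ω : Fin 4 → ZMod q,
        ∑ w : ZMod q, (if Z ω = w then punif (Fin 4 → ZMod q) ω else 0)
          = punif (Fin 4 → ZMod q) ω := by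
      intro ω; simp
    rw [Finset.sum_congr rfl (fun ω _ => h1 ω)]
    unfold punif
    rw [Finset.sum_const, Finset.card_univ, nsmul_eq_mul, mul_inv_cancel₀]
    exact Nat.cast_ne_zero.mpr Fintype.card_ne_zero
  have hq0 : (q : ℝ) ≠ 0 := Nat.cast_ne_zero.mpr (NeZero.ne q)
  have hmul : (q : ℝ) * pr (punif (Fin 4 → ZMod q)) Z 0 = 1 := by
    rw [← hsum]
    rw [Finset.sum_congr rfl (fun w _ => hshift w)]
    rw [Finset.sum_const, Finset.card_univ, ZMod.card, nsmul_eq_mul]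
  rw [hshift z]
  exact ((inv_eq_of_mul_eq_one_right hmul)).symm

lemma ent_eq_one_of_pr {Ω : Type} [Fintype Ω] (q : ℕ) [NeZero q] (hq3 : 3 ≤ q)
    (p : Ω → ℝ) (Z : Ω → ZMod q) (h : ∀ z, pr p Z z = (q : ℝ)⁻¹) :
    ent (q : ℝ) p Z = 1 := by
  have hq1 : (1 : ℝ) < q := by exact_mod_cast lt_of_lt_of_le (by norm_num) hq3
  have hq0 : (q : ℝ) ≠ 0 := by positivity
  unfold ent
  simp only [h]
  rw [Finset.sum_const, Finset.card_univ, ZMod.card, nsmul_eq_mul,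
    Real.logb_inv, Real.logb_self_eq_one hq1]
  field_simp

end GDSP

open GDSP in
/-- Achievability part of the paper's counterexample (Figure 4): on the
complete bipartite graph `K_{3,9}` (left vertices `v₁,v₂,v₃`, right vertices
`u_{j+3ℓ}`, `j ∈ {1,2,3}`, `ℓ ∈ {0,1,2}`), where the edge `{v_i, u_{j+3ℓ}}`
demands file `A_{ℓ+1}` and the edges inside each right triple demand `A₄`, the
assignment `h_{v_i} = A₄` and `h_{u_{j+3ℓ}} = A_{ℓ+1} + (j-1)·A₄` (files are
single uniform symbols over `F_q`, `q ≥ 3`; coordinate `ℓ ∈ Fin 3` of the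
sample is `A_{ℓ+1}` and coordinate `3` is `A₄`) is valid with total memory
`12`: every bipartite edge recovers its demanded file, and every black edge in
a right triple recovers `A₄`, since two distinct combinations
`A_c + αA₄, A_c + βA₄` with `α ≠ β` determine `A₄`. -/
theorem stmt12 (q : ℕ) [NeZero q] (hq : q.Prime) (hq3 : 3 ≤ q)
    (p : (Fin 4 → ZMod q) → ℝ) (hp : p = punif (Fin 4 → ZMod q))
    (hv : (Fin 4 → ZMod q) → ZMod q) (hhv : hv = fun ω => ω 3)
    (hu : Fin 3 → Fin 3 → (Fin 4 → ZMod q) → ZMod q)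
    (hhu : hu = fun (ℓ j : Fin 3) (ω : Fin 4 → ZMod q) => ω ℓ.castSucc + (j : ZMod q) * ω 3) :
    -- each bipartite edge {v_i, u_{j+3ℓ}} recovers its demanded file A_{ℓ+1}
    (∀ ℓ j : Fin 3, condEnt (q : ℝ) p (fun ω => ω ℓ.castSucc)
        (fun ω => (hv ω, hu ℓ j ω)) = 0) ∧
    -- each black edge inside a right triple recovers A₄
    (∀ ℓ j j' : Fin 3, j ≠ j' → condEnt (q : ℝ) p (fun ω => ω 3)
        (fun ω => (hu ℓ j ω, hu ℓ j' ω)) = 0) ∧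
    -- each stored function occupies one unit of memory, for a total of 12
    (∀ ℓ j : Fin 3, ent (q : ℝ) p (hu ℓ j) = 1) ∧
    ent (q : ℝ) p hv = 1 ∧
    3 * ent (q : ℝ) p hv + ∑ ℓ : Fin 3, ∑ j : Fin 3, ent (q : ℝ) p (hu ℓ j) = 12 := by
  haveI := Fact.mk hq
  subst hp hhv hhu
  have hcastne : ∀ a b : Fin 3, a ≠ b → ((b : ZMod q) - (a : ZMod q)) ≠ 0 := by
    intro a b hab hzero
    have heq : (a : ZMod q) = (b : ZMod q) := by linear_combination -hzero
    have ha : ((a : ℕ) : ZMod q).val = (a : ℕ) :=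
      ZMod.val_cast_of_lt (lt_of_lt_of_le a.isLt hq3)
    have hb : ((b : ℕ) : ZMod q).val = (b : ℕ) :=
      ZMod.val_cast_of_lt (lt_of_lt_of_le b.isLt hq3)
    apply hab
    apply Fin.ext
    rw [← ha, ← hb, heq]
  have h3ne : ∀ ℓ : Fin 3, (3 : Fin 4) ≠ ℓ.castSucc := by
    intro ℓ
    fin_cases ℓ <;> decide
  have hentu : ∀ ℓ j : Fin 3,
      ent (q : ℝ) (punif (Fin 4 → ZMod q))
        (fun ω => ω ℓ.castSucc + (j : ZMod q) * ω 3) = 1 := by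
    intro ℓ j
    apply ent_eq_one_of_pr q hq3
    intro z
    apply pr_const_shift q _ ℓ.castSucc
    intro ω c
    rw [Function.update_self, Function.update_of_ne (h3ne ℓ)]
    ring
  have hentv : ent (q : ℝ) (punif (Fin 4 → ZMod q)) (fun ω : Fin 4 → ZMod q => ω 3) = 1 := by
    apply ent_eq_one_of_pr q hq3
    intro z
    apply pr_const_shift q _ 3
    intro ω c
    rw [Function.update_self]
  refine ⟨?_, ?_, ?_, hentv, ?_⟩
  · intro ℓ j
    apply condEnt_eq_zero_of_fun (q : ℝ) _ _ _
      (fun y : ZMod q × ZMod q => y.2 - (j : ZMod q) * y.1)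
    intro ω
    simp only
    ring
  · intro ℓ j j' hjj'
    apply condEnt_eq_zero_of_fun (q : ℝ) _ _ _
      (fun y : ZMod q × ZMod q => (y.2 - y.1) * ((j' : ZMod q) - (j : ZMod q))⁻¹)
    intro ω
    simp only
    rw [eq_mul_inv_iff_mul_eq₀ (hcastne j j' hjj')]
    ring
  · intro ℓ j
    exact hentu ℓ j
  · simp only [hentv, hentu]
    simp
    norm_num
end
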